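/- In the setting of unipotent stabilization (L/K quadratic Galois, char K ≠ 2, τ the nontrivial Galois element, θ the induced semilinear involution of W_L = L ⊗_K W_K, L-subspaces W_± ⊆ W_L, L-linear isomorphisms φ_± : W_± → θ(W_∓) with φ_-^τ ∘ φ_+ = id_{W_+} + n, n nilpotent), define recursively φ_±^{(0)} := φ_± and φ_±^{(k+1)} := (1/2)(φ_±^{(k)} + ((φ_∓^{(k)})^τ)^{-1}) for k ≥ 0. Then there exists k₀ ≥ 0 such that for all k ≥ k₀ one has φ_±^{(k)} = φ_±^{(k₀)} and (φ_∓^{(k)})^τ ∘ φ_±^{(k)} = id_{W_±}. -/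

import Mathlib

open scoped TensorProduct

/-- The `τ`-semilinear involution `θ : L ⊗[K] W_K → L ⊗[K] W_K`,
`a ⊗ w ↦ τ(a) ⊗ w`, induced by a Galois automorphism `τ ∈ Gal(L/K)`. -/
noncomputable def thetaMap (K L : Type*) [Field K] [Field L] [Algebra K L]
    (τ : L ≃ₐ[K] L) (WK : Type*) [AddCommGroup WK] [Module K WK] :
    (L ⊗[K] WK) → (L ⊗[K] WK) :=
  fun x => LinearMap.rTensor WK τ.toLinearMap x

/-- The `τ`-conjugate `φ^τ := θ ∘ φ ∘ θ` of a map `φ : A → B` between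
subspaces, as a map `C → D` (where `θ` maps `C` into `A` and `B` into `D`). -/
def conjFun {L : Type*} [Field L] {WL : Type*} [AddCommGroup WL] [Module L WL]
    (θ : WL → WL) (A B C D : Submodule L WL) (f : ↥A → ↥B)
    (h1 : ∀ x : WL, x ∈ C → θ x ∈ A) (h2 : ∀ x : WL, x ∈ B → θ x ∈ D) :
    ↥C → ↥D :=
  fun x => ⟨θ ((f ⟨θ (x : WL), h1 x x.2⟩ : ↥B) : WL),
    h2 _ (f ⟨θ (x : WL), h1 x x.2⟩).2⟩

/-- One step of unipotent stabilization: it replaces the pair `(φ₊, φ₋)` with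
the pair `(½(φ₊ + (φ₋^τ)⁻¹), ½(φ₋ + (φ₊^τ)⁻¹))`. -/
noncomputable def stabStep {L : Type*} [Field L] {WL : Type*} [AddCommGroup WL]
    [Module L WL] (θ : WL → WL) (Wp Wm Tp Tm : Submodule L WL)
    (h1 : ∀ x : WL, x ∈ Tp → θ x ∈ Wm) (h2 : ∀ x : WL, x ∈ Tm → θ x ∈ Wp)
    (fp : ↥Wp → ↥Tp) (fm : ↥Wm → ↥Tm) : (↥Wp → ↥Tp) × (↥Wm → ↥Tm) :=
  (fun x => (2 : L)⁻¹ • (fp x + Function.invFun (conjFun θ Wm Tm Tp Wp fm h1 h2) x),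
   fun y => (2 : L)⁻¹ • (fm y + Function.invFun (conjFun θ Wp Tp Tm Wm fp h2 h1) y))

/-- The recursively defined sequence of unipotent stabilization:
`φ_±^{(0)} := φ_±` and `φ_±^{(k+1)} := ½(φ_±^{(k)} + ((φ_∓^{(k)})^τ)⁻¹)`. -/
noncomputable def stabSeq {L : Type*} [Field L] {WL : Type*} [AddCommGroup WL]
    [Module L WL] (θ : WL → WL) (Wp Wm Tp Tm : Submodule L WL)
    (h1 : ∀ x : WL, x ∈ Tp → θ x ∈ Wm) (h2 : ∀ x : WL, x ∈ Tm → θ x ∈ Wp)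
    (fp : ↥Wp → ↥Tp) (fm : ↥Wm → ↥Tm) : ℕ → (↥Wp → ↥Tp) × (↥Wm → ↥Tm)
  | 0 => (fp, fm)
  | k + 1 =>
      stabStep θ Wp Wm Tp Tm h1 h2
        (stabSeq θ Wp Wm Tp Tm h1 h2 fp fm k).1
        (stabSeq θ Wp Wm Tp Tm h1 h2 fp fm k).2


section Aux

variable {L : Type*} [Field L] {WL : Type*} [AddCommGroup WL] [Module L WL]

lemma conjFun_inj {θ : WL → WL} (hθθ : ∀ x, θ (θ x) = x)
    (A B C D : Submodule L WL) (f : ↥A → ↥B)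
    (h1 : ∀ x : WL, x ∈ C → θ x ∈ A) (h2 : ∀ x : WL, x ∈ B → θ x ∈ D)
    (hf : Function.Injective f) :
    Function.Injective (conjFun θ A B C D f h1 h2) := by
  intro a b hab
  have h := congrArg (fun t : ↥D => θ (t : WL)) hab
  simp only [conjFun] at h
  rw [hθθ, hθθ] at h
  have h3 := hf (Subtype.ext h)
  have h4 : θ (a : WL) = θ (b : WL) := congrArg Subtype.val h3
  have h5 : (a : WL) = b := by rw [← hθθ (a : WL), h4, hθθ]
  exact Subtype.ext h5


lemma theta_zero {θ : WL → WL} (hadd : ∀ x y, θ (x + y) = θ x + θ y) :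
    θ 0 = 0 := by
  have := hadd 0 0
  rw [add_zero] at this
  exact (left_eq_add.mp this)


lemma mkM {θ : WL → WL} {σ : L → L}
    (hθθ : ∀ x, θ (θ x) = x) (hadd : ∀ x y, θ (x + y) = θ x + θ y)
    (hsmul : ∀ (c : L) (x : WL), θ (c • x) = σ c • θ x)
    (hσσ : ∀ c, σ (σ c) = c)
    (Wp Wm Tp Tm : Submodule L WL)
    (h1 : ∀ x : WL, x ∈ Tp → θ x ∈ Wm) (h2 : ∀ x : WL, x ∈ Tm → θ x ∈ Wp)
    (h1' : ∀ x : WL, x ∈ Wm → θ x ∈ Tp)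
    (fpl : ↥Wp →ₗ[L] ↥Tp) (fml : ↥Wm →ₗ[L] ↥Tm)
    (hfp : Function.Bijective ⇑fpl)
    (N : ↥Wp →ₗ[L] ↥Wp) (ε : ℕ) (hN : N ^ ε = 0)
    (hg : ∀ x, conjFun θ Wm Tm Tp Wp ⇑fml h1 h2 (fpl x) = x + N x) :
    ∃ M : ↥Wm →ₗ[L] ↥Wm, M ^ ε = 0 ∧
      ∀ y, conjFun θ Wp Tp Tm Wm ⇑fpl h2 h1 (fml y) = y + M y := by
  classical
  -- the linear map  y ↦ conjFun fpl (fml y)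
  set hfun : ↥Wm → ↥Wm := fun y => conjFun θ Wp Tp Tm Wm ⇑fpl h2 h1 (fml y) with hhfun
  have hfun_add : ∀ y z, hfun (y + z) = hfun y + hfun z := by
    intro y z
    apply Subtype.ext
    show θ _ = θ _ + θ _
    have e1 : (⟨θ ((fml (y + z) : WL)), h2 _ (fml (y+z)).2⟩ : ↥Wp)
        = ⟨θ ((fml y : WL)), h2 _ (fml y).2⟩ + ⟨θ ((fml z : WL)), h2 _ (fml z).2⟩ := by
      apply Subtype.ext
      show θ ((fml (y+z) : WL)) = θ (fml y : WL) + θ (fml z : WL)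
      rw [map_add, Submodule.coe_add, hadd]
    show θ ((fpl ⟨θ ((fml (y + z) : WL)), h2 _ (fml (y+z)).2⟩ : WL)) = _
    rw [e1, map_add, Submodule.coe_add, hadd]
  have hfun_smul : ∀ (c : L) y, hfun (c • y) = c • hfun y := by
    intro c y
    apply Subtype.ext
    have e1 : (⟨θ ((fml (c • y) : WL)), h2 _ (fml (c • y)).2⟩ : ↥Wp)
        = σ c • ⟨θ ((fml y : WL)), h2 _ (fml y).2⟩ := by
      apply Subtype.ext
      show θ ((fml (c • y) : WL)) = σ c • θ (fml y : WL)
      rw [map_smul, Submodule.coe_smul, hsmul]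
    show θ ((fpl ⟨θ ((fml (c • y) : WL)), h2 _ (fml (c•y)).2⟩ : WL)) = (c • hfun y : ↥Wm)
    rw [e1, map_smul, Submodule.coe_smul, hsmul, hσσ]
    rfl
  set Hlin : ↥Wm →ₗ[L] ↥Wm :=
    { toFun := hfun
      map_add' := hfun_add
      map_smul' := hfun_smul } with hHlin
  set Mlin : ↥Wm →ₗ[L] ↥Wm := Hlin - 1 with hMlin
  refine ⟨Mlin, ?_, ?_⟩
  · -- nilpotency via conjugation by Ψ
    set Ψ : ↥Wp → ↥Wm := fun z => ⟨θ ((fpl z : WL)), h1 _ (fpl z).2⟩ with hΨ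
    have hΨsurj : Function.Surjective Ψ := by
      intro w
      refine ⟨(Equiv.ofBijective _ hfp).symm ⟨θ (w : WL), h1' _ w.2⟩, ?_⟩
      apply Subtype.ext
      show θ ((fpl ((Equiv.ofBijective _ hfp).symm ⟨θ (w : WL), h1' _ w.2⟩) : WL)) = (w : WL)
      have : fpl ((Equiv.ofBijective _ hfp).symm ⟨θ (w : WL), h1' _ w.2⟩)
          = ⟨θ (w : WL), h1' _ w.2⟩ :=
        (Equiv.ofBijective _ hfp).apply_symm_apply _
      rw [this]
      exact hθθ _
    have hkey : ∀ z, Mlin (Ψ z) = Ψ (N z) := by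
      intro z
      have hfmlΨ : ((fml (Ψ z) : WL)) = θ ((z + N z : ↥Wp) : WL) := by
        have := congrArg Subtype.val (hg z)
        have h' : θ ((fml (Ψ z) : WL)) = ((z + N z : ↥Wp) : WL) := this
        rw [← h', hθθ]
      have hHΨ : Hlin (Ψ z) = Ψ (z + N z) := by
        have e2 : (⟨θ ((fml (Ψ z) : WL)), h2 _ (fml (Ψ z)).2⟩ : ↥Wp) = z + N z := by
          apply Subtype.ext
          show θ ((fml (Ψ z) : WL)) = ((z + N z : ↥Wp) : WL)
          rw [hfmlΨ, hθθ]
        apply Subtype.ext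
        show θ ((fpl ⟨θ ((fml (Ψ z) : WL)), h2 _ (fml (Ψ z)).2⟩ : WL)) = θ ((fpl (z + N z) : WL))
        rw [e2]
      have hΨadd : Ψ (z + N z) = Ψ z + Ψ (N z) := by
        apply Subtype.ext
        show θ ((fpl (z + N z) : WL)) = θ ((fpl z : WL)) + θ ((fpl (N z) : WL))
        rw [map_add, Submodule.coe_add, hadd]
      rw [hMlin, LinearMap.sub_apply, Module.End.one_apply, hHΨ, hΨadd]
      abel
    have hpow : ∀ (j : ℕ) (z : ↥Wp), (Mlin ^ j) (Ψ z) = Ψ ((N ^ j) z) := by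
      intro j
      induction j with
      | zero => intro z; simp
      | succ j ih =>
          intro z
          rw [pow_succ, pow_succ]
          simp only [Module.End.mul_apply]
          rw [hkey, ih]
    ext w
    obtain ⟨z, rfl⟩ := hΨsurj w
    have h12 : (Mlin ^ ε) (Ψ z) = Ψ ((N ^ ε) z) := hpow ε z
    rw [hN] at h12
    rw [h12]
    show θ ((fpl ((0 : ↥Wp →ₗ[L] ↥Wp) z) : WL)) = (((0 : ↥Wm →ₗ[L] ↥Wm) (Ψ z) : ↥Wm) : WL)
    simp [theta_zero hadd]
  · intro y
    have h0 : conjFun θ Wp Tp Tm Wm ⇑fpl h2 h1 (fml y) = Hlin y := rfl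
    rw [h0, hMlin, LinearMap.sub_apply, Module.End.one_apply]
    abel


lemma stepAux {θ : WL → WL} {σ : L → L}
    (hθθ : ∀ x, θ (θ x) = x) (hadd : ∀ x y, θ (x + y) = θ x + θ y)
    (hsmul : ∀ (c : L) (x : WL), θ (c • x) = σ c • θ x)
    (hσ2 : σ ((2:L)⁻¹) = (2:L)⁻¹) (h2L : (2:L) ≠ 0)
    (Wp Wm Tp Tm : Submodule L WL)
    (h1 : ∀ x : WL, x ∈ Tp → θ x ∈ Wm) (h2 : ∀ x : WL, x ∈ Tm → θ x ∈ Wp)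
    (fpl : ↥Wp →ₗ[L] ↥Tp) (fml : ↥Wm →ₗ[L] ↥Tm)
    (hfp : Function.Bijective ⇑fpl) (hfm : Function.Bijective ⇑fml)
    (N : ↥Wp →ₗ[L] ↥Wp) (M : ↥Wm →ₗ[L] ↥Wm) (ε : ℕ)
    (hN : N ^ ε = 0) (hM : M ^ ε = 0)
    (hg : ∀ x, conjFun θ Wm Tm Tp Wp ⇑fml h1 h2 (fpl x) = x + N x)
    (hh : ∀ y, conjFun θ Wp Tp Tm Wm ⇑fpl h2 h1 (fml y) = y + M y) :
    ∃ (fpl' : ↥Wp →ₗ[L] ↥Tp) (N' : ↥Wp →ₗ[L] ↥Wp),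
      (stabStep θ Wp Wm Tp Tm h1 h2 ⇑fpl ⇑fml).1 = ⇑fpl' ∧
      Function.Bijective ⇑fpl' ∧ N' ^ ((ε + 1) / 2) = 0 ∧
      ∀ x, conjFun θ Wm Tm Tp Wp (stabStep θ Wp Wm Tp Tm h1 h2 ⇑fpl ⇑fml).2 h1 h2
        ((stabStep θ Wp Wm Tp Tm h1 h2 ⇑fpl ⇑fml).1 x) = x + N' x := by
  classical
  set c : L := (2:L)⁻¹ with hc
  -- units 1 + N and 1 + M
  obtain ⟨u, hu⟩ : IsUnit ((1 : ↥Wp →ₗ[L] ↥Wp) + N) := IsNilpotent.isUnit_one_add ⟨ε, hN⟩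
  set G : ↥Wp →ₗ[L] ↥Wp := ↑u⁻¹ with hG
  have hgG : ((1 : ↥Wp →ₗ[L] ↥Wp) + N) * G = 1 := by rw [← hu]; exact u.mul_inv
  have hGg : G * ((1 : ↥Wp →ₗ[L] ↥Wp) + N) = 1 := by rw [← hu]; exact u.inv_mul
  have hcommNu : Commute N ↑u := by
    rw [hu]; exact (Commute.one_right N).add_right (Commute.refl N)
  have hcomm : Commute N G := hcommNu.units_inv_right
  obtain ⟨v, hv⟩ : IsUnit ((1 : ↥Wm →ₗ[L] ↥Wm) + M) := IsNilpotent.isUnit_one_add ⟨ε, hM⟩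
  set H : ↥Wm →ₗ[L] ↥Wm := ↑v⁻¹ with hH
  have hhH : ((1 : ↥Wm →ₗ[L] ↥Wm) + M) * H = 1 := by rw [← hv]; exact v.mul_inv
  -- inverse functions
  have hψinj : Function.Injective (conjFun θ Wm Tm Tp Wp ⇑fml h1 h2) :=
    conjFun_inj hθθ _ _ _ _ _ _ _ hfm.1
  have hχinj : Function.Injective (conjFun θ Wp Tp Tm Wm ⇑fpl h2 h1) :=
    conjFun_inj hθθ _ _ _ _ _ _ _ hfp.1
  have hinvψ : ∀ x, Function.invFun (conjFun θ Wm Tm Tp Wp ⇑fml h1 h2) x = fpl (G x) := by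
    intro x
    have hx : conjFun θ Wm Tm Tp Wp ⇑fml h1 h2 (fpl (G x)) = x := by
      rw [hg (G x)]
      have e : G x + N (G x) = (((1 : ↥Wp →ₗ[L] ↥Wp) + N) * G) x := by
        simp [Module.End.mul_apply, LinearMap.add_apply]
      rw [e, hgG, Module.End.one_apply]
    conv_lhs => rw [← hx]
    exact Function.leftInverse_invFun hψinj _
  have hinvχ : ∀ y, Function.invFun (conjFun θ Wp Tp Tm Wm ⇑fpl h2 h1) y = fml (H y) := by
    intro y
    have hy : conjFun θ Wp Tp Tm Wm ⇑fpl h2 h1 (fml (H y)) = y := by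
      rw [hh (H y)]
      have e : H y + M (H y) = (((1 : ↥Wm →ₗ[L] ↥Wm) + M) * H) y := by
        simp [Module.End.mul_apply, LinearMap.add_apply]
      rw [e, hhH, Module.End.one_apply]
    conv_lhs => rw [← hy]
    exact Function.leftInverse_invFun hχinj _
  -- the new maps
  set A₁ : ↥Wp →ₗ[L] ↥Wp := c • (1 + G) with hA₁def
  set fpl' : ↥Wp →ₗ[L] ↥Tp := fpl ∘ₗ A₁ with hfpl'
  set B₁ : ↥Wm →ₗ[L] ↥Wm := c • (1 + H) with hB₁def
  set fml' : ↥Wm →ₗ[L] ↥Tm := fml ∘ₗ B₁ with hfml'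
  have hfp'eq : (stabStep θ Wp Wm Tp Tm h1 h2 ⇑fpl ⇑fml).1 = ⇑fpl' := by
    funext x
    show c • (fpl x + Function.invFun (conjFun θ Wm Tm Tp Wp ⇑fml h1 h2) x) = fpl' x
    rw [hinvψ x]
    show c • (fpl x + fpl (G x)) = fpl (A₁ x)
    rw [hA₁def]
    simp only [LinearMap.smul_apply, LinearMap.add_apply, Module.End.one_apply,
      map_smul, map_add]
  have hfm'eq : (stabStep θ Wp Wm Tp Tm h1 h2 ⇑fpl ⇑fml).2 = ⇑fml' := by
    funext y
    show c • (fml y + Function.invFun (conjFun θ Wp Tp Tm Wm ⇑fpl h2 h1) y) = fml' y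
    rw [hinvχ y]
    show c • (fml y + fml (H y)) = fml (B₁ y)
    rw [hB₁def]
    simp only [LinearMap.smul_apply, LinearMap.add_apply, Module.End.one_apply,
      map_smul, map_add]
  -- relations for G
  have hGG : G + G * N = 1 := by rw [← mul_one G, mul_assoc]; rw [one_mul, ← mul_add]; exact hGg
  have hGsub : G = 1 - G * N := eq_sub_of_add_eq hGG
  have hGN : G * N = 1 - G := eq_sub_of_add_eq' hGG
  -- bijectivity of A₁, fpl'
  have hGNnil : IsNilpotent (G * N) := hcomm.symm.isNilpotent_mul_left ⟨ε, hN⟩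
  have hA₁eq : A₁ = 1 - c • (G * N) := by
    rw [hA₁def]
    nth_rewrite 1 [hGsub]
    match_scalars <;> (field_simp [hc]; try norm_num [hc, h2L])
  have hA₁unit : IsUnit A₁ := by
    rw [hA₁eq]
    exact IsNilpotent.isUnit_one_sub (hGNnil.smul c)
  have hA₁bij : Function.Bijective ⇑A₁ := (Module.End.isUnit_iff A₁).mp hA₁unit
  have hfp'bij : Function.Bijective ⇑fpl' := by
    rw [hfpl', LinearMap.coe_comp]
    exact hfp.comp hA₁bij
  -- the new nilpotent
  set N' : ↥Wp →ₗ[L] ↥Wp := (c * c) • (G * (N * N)) with hN'def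
  -- ring identity:  (c • ((1+N)+1)) * A₁ = 1 + N'
  have expand : (((1 : ↥Wp →ₗ[L] ↥Wp) + N) + 1) * (1 + G)
      = (1 + 1 + 1 + 1) + G * (N * N) := by
    have s1 : (((1 : ↥Wp →ₗ[L] ↥Wp) + N) + 1) * (1 + G)
        = (1 + N) + ((1 + N) * G + (1 + G)) := by noncomm_ring
    rw [s1, hgG]
    nth_rewrite 1 [hGsub]
    have s2 : ((1 : ↥Wp →ₗ[L] ↥Wp) + N) + (1 + (1 + (1 - G * N)))
        = (1 + 1 + 1 + 1) + (1 - G) * N := by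
      noncomm_ring
      rw [smul_mul_assoc]
    rw [s2, ← hGN, mul_assoc]
  have hCA : ((c • (((1 : ↥Wp →ₗ[L] ↥Wp) + N) + 1)) * A₁) = 1 + N' := by
    rw [hA₁def, smul_mul_assoc, mul_smul_comm, smul_smul, expand, smul_add, hN'def]
    congr 1
    have s3 : ((1 : ↥Wp →ₗ[L] ↥Wp) + 1 + 1 + 1) = ((2:L) * (2:L)) • 1 := by
      rw [mul_smul, two_smul, two_smul]
      abel
    rw [s3, smul_smul]
    have s4 : c * c * ((2:L) * (2:L)) = 1 := by rw [hc, mul_mul_mul_comm, inv_mul_cancel₀ h2L, mul_one]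
    rw [s4, one_smul]
  -- nilpotency of N'
  have hN'nil : N' ^ ((ε + 1) / 2) = 0 := by
    have hGNN : Commute G (N * N) := hcomm.symm.mul_right hcomm.symm
    rw [hN'def, smul_pow, hGNN.mul_pow]
    have s5 : (N * N) ^ ((ε + 1) / 2) = N ^ (2 * ((ε + 1) / 2)) := by
      rw [← pow_two, ← pow_mul]
    rw [s5, show 2 * ((ε + 1) / 2) = ε + (2 * ((ε + 1) / 2) - ε) by omega, pow_add, hN,
      zero_mul, mul_zero, smul_zero]
  -- the key identity
  have key1 : ∀ z, conjFun θ Wm Tm Tp Wp ⇑fml' h1 h2 (fpl z) = c • ((z + N z) + z) := by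
    intro z
    set w : ↥Wm := ⟨θ ((fpl z : WL)), h1 _ (fpl z).2⟩ with hw
    apply Subtype.ext
    show θ ((fml' w : WL)) = ((c • ((z + N z) + z) : ↥Wp) : WL)
    have hfml'w : fml' w = c • (fml w + fml (H w)) := by
      rw [hfml']
      show fml (B₁ w) = _
      rw [hB₁def]
      simp only [LinearMap.smul_apply, LinearMap.add_apply, Module.End.one_apply,
        map_smul, map_add]
    rw [hfml'w]
    rw [show ((c • (fml w + fml (H w)) : ↥Tm) : WL)
        = c • (((fml w : WL)) + ((fml (H w) : WL))) by rfl]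
    rw [hsmul, hσ2, hadd]
    have t1 : θ ((fml w : WL)) = ((z + N z : ↥Wp) : WL) := congrArg Subtype.val (hg z)
    have t2 : θ ((fml (H w) : WL)) = ((z : ↥Wp) : WL) := by
      have hWw : H w + M (H w) = w := by
        have e : H w + M (H w) = (((1 : ↥Wm →ₗ[L] ↥Wm) + M) * H) w := by
          simp [Module.End.mul_apply, LinearMap.add_apply]
        rw [e, hhH, Module.End.one_apply]
      have h6 := hh (H w)
      rw [hWw] at h6
      have h7 : θ ((fpl ⟨θ ((fml (H w) : WL)), h2 _ (fml (H w)).2⟩ : WL)) = (w : WL) :=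
        congrArg Subtype.val h6
      have h8 : ((fpl ⟨θ ((fml (H w) : WL)), h2 _ (fml (H w)).2⟩ : ↥Tp) : WL)
          = ((fpl z : ↥Tp) : WL) := by
        calc ((fpl ⟨θ ((fml (H w) : WL)), h2 _ (fml (H w)).2⟩ : ↥Tp) : WL)
            = θ (θ ((fpl ⟨θ ((fml (H w) : WL)), h2 _ (fml (H w)).2⟩ : ↥Tp) : WL)) := (hθθ _).symm
          _ = θ ((w : WL)) := by rw [h7]
          _ = ((fpl z : ↥Tp) : WL) := hθθ _
      have h10 := hfp.1 (Subtype.ext h8)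
      exact congrArg Subtype.val h10
    rw [t1, t2]
    rfl
  refine ⟨fpl', N', hfp'eq, hfp'bij, hN'nil, ?_⟩
  intro x
  rw [hfm'eq, hfp'eq]
  have e0 : fpl' x = fpl (A₁ x) := rfl
  rw [e0, key1 (A₁ x)]
  have e1 : c • ((A₁ x + N (A₁ x)) + A₁ x)
      = ((c • (((1 : ↥Wp →ₗ[L] ↥Wp) + N) + 1)) * A₁) x := by
    simp [Module.End.mul_apply, LinearMap.add_apply, LinearMap.smul_apply, Module.End.one_apply]
  rw [e1, hCA]
  simp [LinearMap.add_apply, Module.End.one_apply]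


end Aux

set_option linter.unusedSectionVars false

section Theta

variable (K L : Type*) [Field K] [Field L] [Algebra K L] [IsGalois K L]
variable (WK : Type*) [AddCommGroup WK] [Module K WK]

lemma tau_tau (hdeg : Module.finrank K L = 2) (τ : L ≃ₐ[K] L) :
    ∀ a, τ (τ a) = a := by
  have : FiniteDimensional K L :=
    Module.finite_of_finrank_pos (by rw [hdeg]; norm_num)
  have hcard : Fintype.card (L ≃ₐ[K] L) = 2 := by
    rw [← Nat.card_eq_fintype_card, IsGalois.card_aut_eq_finrank, hdeg]
  have hτ2 : τ * τ = 1 := by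
    have h : τ ^ Fintype.card (L ≃ₐ[K] L) = 1 := pow_card_eq_one
    rwa [hcard, pow_two] at h
  intro a
  calc τ (τ a) = (τ * τ) a := rfl
    _ = a := by rw [hτ2]; rfl

lemma theta_theta (hdeg : Module.finrank K L = 2) (τ : L ≃ₐ[K] L) :
    ∀ x, thetaMap K L τ WK (thetaMap K L τ WK x) = x := by
  have hid : LinearMap.rTensor WK τ.toLinearMap ∘ₗ LinearMap.rTensor WK τ.toLinearMap
      = LinearMap.id := by
    rw [← LinearMap.rTensor_comp]
    have h : τ.toLinearMap ∘ₗ τ.toLinearMap = LinearMap.id := by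
      ext a
      exact tau_tau K L hdeg τ a
    rw [h, LinearMap.rTensor_id]
  intro x
  have := LinearMap.congr_fun hid x
  simpa [thetaMap] using this

lemma theta_add (τ : L ≃ₐ[K] L) :
    ∀ x y, thetaMap K L τ WK (x + y) = thetaMap K L τ WK x + thetaMap K L τ WK y := by
  intro x y
  unfold thetaMap
  rw [map_add]

lemma theta_smul (τ : L ≃ₐ[K] L) :
    ∀ (c : L) (x : L ⊗[K] WK), thetaMap K L τ WK (c • x) = τ c • thetaMap K L τ WK x := by
  intro c x
  unfold thetaMap
  induction x using TensorProduct.induction_on with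
  | zero => simp
  | tmul a w =>
      rw [TensorProduct.smul_tmul', LinearMap.rTensor_tmul, LinearMap.rTensor_tmul]
      simp [TensorProduct.smul_tmul', map_mul]
  | add u v hu hv =>
      rw [smul_add, map_add, hu, hv, map_add, smul_add]

end Theta


section Aux2

variable {L : Type*} [Field L] {WL : Type*} [AddCommGroup WL] [Module L WL]

lemma fixAux {θ : WL → WL}
    (hθθ : ∀ x, θ (θ x) = x) (h2L : (2:L) ≠ 0)
    (Wp Wm Tp Tm : Submodule L WL)
    (h1 : ∀ x : WL, x ∈ Tp → θ x ∈ Wm) (h2 : ∀ x : WL, x ∈ Tm → θ x ∈ Wp)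
    (fpl : ↥Wp →ₗ[L] ↥Tp) (fml : ↥Wm →ₗ[L] ↥Tm)
    (hfp : Function.Bijective ⇑fpl) (hfm : Function.Bijective ⇑fml)
    (hg : ∀ x, conjFun θ Wm Tm Tp Wp ⇑fml h1 h2 (fpl x) = x)
    (hh : ∀ y, conjFun θ Wp Tp Tm Wm ⇑fpl h2 h1 (fml y) = y) :
    stabStep θ Wp Wm Tp Tm h1 h2 ⇑fpl ⇑fml = (⇑fpl, ⇑fml) := by
  have hψinj : Function.Injective (conjFun θ Wm Tm Tp Wp ⇑fml h1 h2) :=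
    conjFun_inj hθθ _ _ _ _ _ _ _ hfm.1
  have hχinj : Function.Injective (conjFun θ Wp Tp Tm Wm ⇑fpl h2 h1) :=
    conjFun_inj hθθ _ _ _ _ _ _ _ hfp.1
  have hinvψ : ∀ x, Function.invFun (conjFun θ Wm Tm Tp Wp ⇑fml h1 h2) x = fpl x := by
    intro x
    conv_lhs => rw [← hg x]
    exact Function.leftInverse_invFun hψinj _
  have hinvχ : ∀ y, Function.invFun (conjFun θ Wp Tp Tm Wm ⇑fpl h2 h1) y = fml y := by
    intro y
    conv_lhs => rw [← hh y]
    exact Function.leftInverse_invFun hχinj _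
  have half : ∀ (V : Submodule L WL) (t : ↥V), (2:L)⁻¹ • (t + t) = t := by
    intro V t
    rw [← two_smul L t, smul_smul, inv_mul_cancel₀ h2L, one_smul]
  apply Prod.ext
  · funext x
    show (2:L)⁻¹ • (fpl x + Function.invFun (conjFun θ Wm Tm Tp Wp ⇑fml h1 h2) x) = fpl x
    rw [hinvψ x, half]
  · funext y
    show (2:L)⁻¹ • (fml y + Function.invFun (conjFun θ Wp Tp Tm Wm ⇑fpl h2 h1) y) = fml y
    rw [hinvχ y, half]


end Aux2

set_option maxHeartbeats 2000000 in
/-- **Unipotent stabilization: termination of the iteration.**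
In the setting of unipotent stabilization (`L/K` quadratic Galois with
`char K ≠ 2`, `τ` the nontrivial Galois element, `θ` the induced semilinear
involution of `W_L = L ⊗[K] W_K`, `L`-subspaces `W₊, W₋ ⊆ W_L` with
`T₊ = θ(W₋)`, `T₋ = θ(W₊)`, and `L`-linear isomorphisms `φ₊ : W₊ → θ(W₋)`,
`φ₋ : W₋ → θ(W₊)` with `φ₋^τ ∘ φ₊ = id + n`, `n` nilpotent), the recursively
defined sequence `φ_±^{(k)}` stabilizes: there is `k₀ ≥ 0` such that for all
`k ≥ k₀` one has `φ_±^{(k)} = φ_±^{(k₀)}` and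
`(φ_∓^{(k)})^τ ∘ φ_±^{(k)} = id_{W_±}`. -/
theorem stmt_6 (K L : Type*) [Field K] [Field L] [Algebra K L] [IsGalois K L]
    (hdeg : Module.finrank K L = 2) (hchar : (2 : K) ≠ 0)
    (τ : L ≃ₐ[K] L) (hτ : τ ≠ 1)
    (WK : Type*) [AddCommGroup WK] [Module K WK]
    (Wp Wm Tp Tm : Submodule L (L ⊗[K] WK))
    (hTp : ∀ x : L ⊗[K] WK, x ∈ Tp ↔ thetaMap K L τ WK x ∈ Wm)
    (hTm : ∀ x : L ⊗[K] WK, x ∈ Tm ↔ thetaMap K L τ WK x ∈ Wp)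
    (φp : ↥Wp →ₗ[L] ↥Tp) (φm : ↥Wm →ₗ[L] ↥Tm)
    (hφp : Function.Bijective φp) (hφm : Function.Bijective φm)
    (n : ↥Wp →ₗ[L] ↥Wp) (e : ℕ) (he : 1 ≤ e) (hne : n ^ e = 0)
    (hcomp : ∀ x : ↥Wp,
      conjFun (thetaMap K L τ WK) Wm Tm Tp Wp (⇑φm)
        (fun x hx => (hTp x).mp hx) (fun x hx => (hTm x).mp hx) (φp x)
      = x + n x) :
    ∃ k₀ : ℕ, ∀ k : ℕ, k₀ ≤ k →
      (stabSeq (thetaMap K L τ WK) Wp Wm Tp Tm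
          (fun x hx => (hTp x).mp hx) (fun x hx => (hTm x).mp hx) (⇑φp) (⇑φm) k
        = stabSeq (thetaMap K L τ WK) Wp Wm Tp Tm
          (fun x hx => (hTp x).mp hx) (fun x hx => (hTm x).mp hx) (⇑φp) (⇑φm) k₀) ∧
      (∀ x : ↥Wp,
        conjFun (thetaMap K L τ WK) Wm Tm Tp Wp
          ((stabSeq (thetaMap K L τ WK) Wp Wm Tp Tm
            (fun x hx => (hTp x).mp hx) (fun x hx => (hTm x).mp hx) (⇑φp) (⇑φm) k).2)
          (fun x hx => (hTp x).mp hx) (fun x hx => (hTm x).mp hx)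
          ((stabSeq (thetaMap K L τ WK) Wp Wm Tp Tm
            (fun x hx => (hTp x).mp hx) (fun x hx => (hTm x).mp hx) (⇑φp) (⇑φm) k).1 x)
        = x) ∧
      (∀ y : ↥Wm,
        conjFun (thetaMap K L τ WK) Wp Tp Tm Wm
          ((stabSeq (thetaMap K L τ WK) Wp Wm Tp Tm
            (fun x hx => (hTp x).mp hx) (fun x hx => (hTm x).mp hx) (⇑φp) (⇑φm) k).1)
          (fun x hx => (hTm x).mp hx) (fun x hx => (hTp x).mp hx)
          ((stabSeq (thetaMap K L τ WK) Wp Wm Tp Tm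
            (fun x hx => (hTp x).mp hx) (fun x hx => (hTm x).mp hx) (⇑φp) (⇑φm) k).2 y)
        = y) := by
  classical
  set θ : (L ⊗[K] WK) → (L ⊗[K] WK) := thetaMap K L τ WK with hθdef
  have hθθ : ∀ x, θ (θ x) = x := theta_theta K L WK hdeg τ
  have hadd : ∀ x y, θ (x + y) = θ x + θ y := theta_add K L WK τ
  have hsmul : ∀ (c : L) (x : L ⊗[K] WK), θ (c • x) = τ c • θ x := theta_smul K L WK τ
  have hσσ : ∀ c : L, τ (τ c) = c := tau_tau K L hdeg τ
  have h2L : (2 : L) ≠ 0 := by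
    intro hcon
    apply hchar
    apply (algebraMap K L).injective
    rw [map_ofNat, map_zero, hcon]
  have hσ2 : τ ((2 : L)⁻¹) = (2 : L)⁻¹ := by rw [map_inv₀, map_ofNat]
  suffices hmain : ∀ (h1 : ∀ x : L ⊗[K] WK, x ∈ Tp → θ x ∈ Wm)
      (h2 : ∀ x : L ⊗[K] WK, x ∈ Tm → θ x ∈ Wp),
      (∀ x, conjFun θ Wm Tm Tp Wp ⇑φm h1 h2 (φp x) = x + n x) →
      ∃ k₀ : ℕ, ∀ k : ℕ, k₀ ≤ k →
      (stabSeq θ Wp Wm Tp Tm h1 h2 ⇑φp ⇑φm k = stabSeq θ Wp Wm Tp Tm h1 h2 ⇑φp ⇑φm k₀) ∧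
      (∀ x : ↥Wp,
        conjFun θ Wm Tm Tp Wp (stabSeq θ Wp Wm Tp Tm h1 h2 ⇑φp ⇑φm k).2 h1 h2
          ((stabSeq θ Wp Wm Tp Tm h1 h2 ⇑φp ⇑φm k).1 x) = x) ∧
      (∀ y : ↥Wm,
        conjFun θ Wp Tp Tm Wm (stabSeq θ Wp Wm Tp Tm h1 h2 ⇑φp ⇑φm k).1 h2 h1
          ((stabSeq θ Wp Wm Tp Tm h1 h2 ⇑φp ⇑φm k).2 y) = y) by
    exact hmain (fun x hx => (hTp x).mp hx) (fun x hx => (hTm x).mp hx) hcomp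
  intro h1 h2 hcomp'
  have h1' : ∀ x : L ⊗[K] WK, x ∈ Wm → θ x ∈ Tp := by
    intro x hx
    refine (hTp (θ x)).mpr ?_
    show θ (θ x) ∈ Wm
    rw [hθθ]
    exact hx
  set S : ℕ → (↥Wp → ↥Tp) × (↥Wm → ↥Tm) := stabSeq θ Wp Wm Tp Tm h1 h2 ⇑φp ⇑φm with hSdef
  -- the invariant
  have key : ∀ k : ℕ, ∃ (fpl : ↥Wp →ₗ[L] ↥Tp) (fml : ↥Wm →ₗ[L] ↥Tm)
      (N : ↥Wp →ₗ[L] ↥Wp) (M : ↥Wm →ₗ[L] ↥Wm),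
      (S k).1 = ⇑fpl ∧ (S k).2 = ⇑fml ∧
      Function.Bijective ⇑fpl ∧ Function.Bijective ⇑fml ∧
      N ^ (max 1 (e - k)) = 0 ∧ M ^ (max 1 (e - k)) = 0 ∧
      (∀ x, conjFun θ Wm Tm Tp Wp ⇑fml h1 h2 (fpl x) = x + N x) ∧
      (∀ y, conjFun θ Wp Tp Tm Wm ⇑fpl h2 h1 (fml y) = y + M y) := by
    intro k
    induction k with
    | zero =>
        obtain ⟨M0, hM0, hh0⟩ := mkM hθθ hadd hsmul hσσ Wp Wm Tp Tm h1 h2 h1'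
          φp φm hφp n e hne hcomp'
        have hmax : max 1 (e - 0) = e := by omega
        refine ⟨φp, φm, n, M0, rfl, rfl, hφp, hφm, ?_, ?_, hcomp', hh0⟩
        · rw [hmax]; exact hne
        · rw [hmax]; exact hM0
    | succ k ih =>
        obtain ⟨fpl, fml, N, M, hp1, hp2, hbp, hbm, hNk, hMk, hgk, hhk⟩ := ih
        obtain ⟨fpl', N', hfp'eq, hfp'bij, hN', hg'⟩ :=
          stepAux hθθ hadd hsmul hσ2 h2L Wp Wm Tp Tm h1 h2 fpl fml hbp hbm
            N M (max 1 (e - k)) hNk hMk hgk hhk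
        obtain ⟨fml', M', hfm'eq0, hfm'bij, hM', hh'⟩ :=
          stepAux hθθ hadd hsmul hσ2 h2L Wm Wp Tm Tp h2 h1 fml fpl hbm hbp
            M N (max 1 (e - k)) hMk hNk hhk hgk
        have hfm'eq : (stabStep θ Wp Wm Tp Tm h1 h2 ⇑fpl ⇑fml).2 = ⇑fml' := hfm'eq0
        have hSk1 : S (k + 1) = stabStep θ Wp Wm Tp Tm h1 h2 ⇑fpl ⇑fml := by
          show stabStep θ Wp Wm Tp Tm h1 h2 (S k).1 (S k).2 = _
          rw [hp1, hp2]
        have hle : (max 1 (e - k) + 1) / 2 ≤ max 1 (e - (k + 1)) := by omega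
        refine ⟨fpl', fml', N', M', ?_, ?_, hfp'bij, hfm'bij, ?_, ?_, ?_, ?_⟩
        · rw [hSk1]; exact hfp'eq
        · rw [hSk1]; exact hfm'eq
        · calc N' ^ max 1 (e - (k + 1))
              = N' ^ ((max 1 (e - k) + 1) / 2) *
                N' ^ (max 1 (e - (k + 1)) - (max 1 (e - k) + 1) / 2) := by
                rw [← pow_add]; congr 1; omega
            _ = 0 := by rw [hN', zero_mul]
        · calc M' ^ max 1 (e - (k + 1))
              = M' ^ ((max 1 (e - k) + 1) / 2) *
                M' ^ (max 1 (e - (k + 1)) - (max 1 (e - k) + 1) / 2) := by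
                rw [← pow_add]; congr 1; omega
            _ = 0 := by rw [hM', zero_mul]
        · intro x
          have hx := hg' x
          rw [hfp'eq, hfm'eq] at hx
          exact hx
        · intro y
          have hy := hh' y
          have e1 : (stabStep θ Wm Wp Tm Tp h2 h1 ⇑fml ⇑fpl).2
              = (stabStep θ Wp Wm Tp Tm h1 h2 ⇑fpl ⇑fml).1 := rfl
          have e2 : (stabStep θ Wm Wp Tm Tp h2 h1 ⇑fml ⇑fpl).1
              = (stabStep θ Wp Wm Tp Tm h1 h2 ⇑fpl ⇑fml).2 := rfl
          rw [e1, e2, hfp'eq, hfm'eq] at hy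
          exact hy
  -- the fixed point at k = e
  obtain ⟨fpl, fml, N, M, hp1, hp2, hbp, hbm, hN1, hM1, hgE, hhE⟩ := key e
  have hmax1 : max 1 (e - e) = 1 := by omega
  rw [hmax1, pow_one] at hN1 hM1
  have hg1 : ∀ x, conjFun θ Wm Tm Tp Wp ⇑fml h1 h2 (fpl x) = x := by
    intro x
    rw [hgE x, hN1]
    simp
  have hh1 : ∀ y, conjFun θ Wp Tp Tm Wm ⇑fpl h2 h1 (fml y) = y := by
    intro y
    rw [hhE y, hM1]
    simp
  have hfix : stabStep θ Wp Wm Tp Tm h1 h2 ⇑fpl ⇑fml = (⇑fpl, ⇑fml) :=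
    fixAux hθθ h2L Wp Wm Tp Tm h1 h2 fpl fml hbp hbm hg1 hh1
  have hSe : S e = (⇑fpl, ⇑fml) := by
    rw [← hp1, ← hp2]
  have hstab : ∀ k, e ≤ k → S k = S e := by
    intro k hk
    induction k, hk using Nat.le_induction with
    | base => rfl
    | succ k hk ihk =>
        have hstep : S (k + 1) = stabStep θ Wp Wm Tp Tm h1 h2 (S k).1 (S k).2 := rfl
        rw [hstep, ihk, hSe]
        exact hfix
  refine ⟨e, fun k hk => ⟨hstab k hk, ?_, ?_⟩⟩
  · intro x
    rw [hstab k hk, hp1, hp2]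
    exact hg1 x
  · intro y
    rw [hstab k hk, hp1, hp2]
    exact hh1 y
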